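/- Let G be a profinite group, and let 1 → N → E → G → 1 be an extension of profinite groups with N abelian. Suppose every element g of G has a unique lift g̃ in E satisfying a fixed compatible family of conditions (namely, agreeing with a prescribed continuous action of G on a dense invariant structure). Then g ↦ g̃ is a continuous splitting of E → G. More concretely: if s : G → E is a map that is a set-theoretic section of E → G, and s is a group homomorphism (by uniqueness of lifts), and the action of E on a discrete faithful module determines s, then s is continuous. -/

import Mathlib

/-- Continuity of a splitting determined by continuous actions on discrete sets: let
`π : E → G` be a continuous surjection of profinite groups and `s : G → E` a group-theoretic
section of `π`.  If `E` acts faithfully on a set `M`, the action of `E` on `M` is continuous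
for the discrete topology on `M`, and the resulting action of `G` on `M` through `s` is also
continuous for the discrete topology, then `s` is continuous. -/
theorem stmt_13 (G E M : Type) [Group G] [Group E]
    [TopologicalSpace G] [IsTopologicalGroup G] [CompactSpace G] [TotallyDisconnectedSpace G]
    [T2Space G]
    [TopologicalSpace E] [IsTopologicalGroup E] [CompactSpace E] [TotallyDisconnectedSpace E]
    [T2Space E]
    [MulAction E M]
    (hfaithful : ∀ e e' : E, (∀ m : M, e • m = e' • m) → e = e')
    (hEcont : ∀ m m' : M, IsOpen {e : E | e • m = m'})
    (π : E →* G) (hπcont : Continuous π) (hπsurj : Function.Surjective π)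
    (s : G →* E) (hsec : ∀ g : G, π (s g) = g)
    (hscont : ∀ m m' : M, IsOpen {g : G | s g • m = m'}) :
    Continuous s := by
  letI : TopologicalSpace M := ⊥
  haveI : DiscreteTopology M := ⟨rfl⟩
  let f : E → (M → M) := fun e m => e • m
  have hfcont : Continuous f :=
    continuous_pi fun m => continuous_discrete_rng.2 fun m' => hEcont m m'
  have hfinj : Function.Injective f := fun e e' h => hfaithful e e' fun m => congrFun h m
  have hemb := hfcont.isClosedEmbedding hfinj
  have hfs : Continuous (f ∘ s) :=
    continuous_pi fun m => continuous_discrete_rng.2 fun m' => hscont m m'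
  exact hemb.isInducing.continuous_iff.mpr hfs
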